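/- arXiv:1312.2230 — 2 statements merged into one kernel-verified Lean document; each statement's English description precedes it below -/
import Mathlib

section
/- Let p, q be integers with 0 ≤ q < p and gcd(p,q) = 1. Let g : ℝ³ → ℝ³ be the rotation by angle 2πq/p about the x₃-axis and f : ℝ³ → ℝ³ the reflection (x₁,x₂,x₃) ↦ (x₁,x₂,−x₃). Let ∼ be the equivalence relation on the unit sphere S² = {x ∈ ℝ³ : ‖x‖ = 1} generated by the pairs x ∼ f(g(x)) for all x ∈ S² with x₃ ≥ 0. Then for every point x of the equator (i.e. x ∈ S² with x₃ = 0), the equivalence class of x equals the rotation orbit {g^k(x) : k ∈ ℤ} and contains exactly p points. -/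
/-- The rotation of `ℝ³ = ℂ × ℝ` by angle `θ` about the `x₃`-axis. -/
noncomputable def rotZ (θ : ℝ) : Equiv.Perm (ℂ × ℝ) :=
  (Equiv.mulLeft₀ (Complex.exp (θ * Complex.I)) (Complex.exp_ne_zero _)).prodCongr
    (Equiv.refl ℝ)

/-- The reflection `(x₁,x₂,x₃) ↦ (x₁,x₂,-x₃)` of `ℝ³ = ℂ × ℝ`. -/
def reflZ : ℂ × ℝ → ℂ × ℝ := fun x => (x.1, -x.2)

/-- The generating relation on the unit sphere: `x ∼ f(g(x))` for `x` in the
closed upper hemisphere, where `g` is the rotation by `2πq/p` and `f` is the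
reflection in the equatorial plane. -/
def lensRel (p q : ℤ) : ℂ × ℝ → ℂ × ℝ → Prop := fun x y =>
  ‖x.1‖ ^ 2 + x.2 ^ 2 = 1 ∧ 0 ≤ x.2 ∧
    y = reflZ (rotZ (2 * Real.pi * (q : ℝ) / (p : ℝ)) x)

lemma rotZ_apply (θ : ℝ) (x : ℂ × ℝ) :
    rotZ θ x = (Complex.exp (θ * Complex.I) * x.1, x.2) := rfl

lemma rotZ_inv_apply (θ : ℝ) (x : ℂ × ℝ) :
    (rotZ θ)⁻¹ x = ((Complex.exp (θ * Complex.I))⁻¹ * x.1, x.2) := rfl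

lemma rotZ_zpow_apply (θ : ℝ) (k : ℤ) : ∀ x : ℂ × ℝ,
    (rotZ θ ^ k) x = (Complex.exp (θ * Complex.I) ^ k * x.1, x.2) := by
  have hc := Complex.exp_ne_zero (θ * Complex.I)
  induction k using Int.induction_on with
  | zero => simp
  | succ n ih =>
      intro x
      rw [zpow_add_one, Equiv.Perm.mul_apply, rotZ_apply, ih]
      refine Prod.ext ?_ rfl
      rw [zpow_add_one₀ hc]; ring
  | pred n ih =>
      intro x
      rw [zpow_sub_one, Equiv.Perm.mul_apply, rotZ_inv_apply, ih]
      refine Prod.ext ?_ rfl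
      rw [zpow_sub_one₀ hc]; ring


/-- On the equator, each equivalence class of the lens space identification is the
rotation orbit `{g^k(x) : k ∈ ℤ}`, and it contains exactly `p` points. -/
theorem stmt0 (p q : ℤ) (h0 : 0 ≤ q) (h1 : q < p) (hpq : Int.gcd p q = 1)
    (x : ℂ × ℝ) (hx : ‖x.1‖ ^ 2 + x.2 ^ 2 = 1) (hx3 : x.2 = 0) :
    {y | Relation.EqvGen (lensRel p q) x y} =
      {y | ∃ k : ℤ, y = (rotZ (2 * Real.pi * (q : ℝ) / (p : ℝ)) ^ k) x} ∧
    ({y | Relation.EqvGen (lensRel p q) x y}.ncard : ℤ) = p := by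
  have hp0 : 0 < p := lt_of_le_of_lt h0 h1
  set θ : ℝ := 2 * Real.pi * (q : ℝ) / (p : ℝ) with hθ
  set c : ℂ := Complex.exp (θ * Complex.I) with hcdef
  have hc : c ≠ 0 := Complex.exp_ne_zero _
  have habs : ‖c‖ = 1 := Complex.norm_exp_ofReal_mul_I θ
  have hx1 : ‖x.1‖ = 1 := by
    rw [hx3] at hx
    nlinarith [norm_nonneg x.1]
  have hx10 : x.1 ≠ 0 := by
    intro h; rw [h] at hx1; simp at hx1
  -- step lemma
  have hstep : ∀ k : ℤ, lensRel p q ((rotZ θ ^ k) x) ((rotZ θ ^ (k + 1)) x) := by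
    intro k
    refine ⟨?_, ?_, ?_⟩
    · rw [rotZ_zpow_apply]
      simp [norm_mul, norm_zpow, habs, hx1, hx3]
    · rw [rotZ_zpow_apply]; simp [hx3]
    · rw [rotZ_zpow_apply, rotZ_zpow_apply, rotZ_apply]
      refine Prod.ext ?_ ?_
      · show c ^ (k + 1) * x.1 = c * (c ^ k * x.1)
        rw [zpow_add_one₀ hc]; ring
      · show x.2 = -x.2
        rw [hx3, neg_zero]
  -- set equality
  have hset : {y | Relation.EqvGen (lensRel p q) x y} =
      {y | ∃ k : ℤ, y = (rotZ θ ^ k) x} := by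
    ext y
    simp only [Set.mem_setOf_eq]
    constructor
    · intro h
      have key : ∀ a b, Relation.EqvGen (lensRel p q) a b →
          ((∃ k : ℤ, a = (rotZ θ ^ k) x) ↔ (∃ k : ℤ, b = (rotZ θ ^ k) x)) := by
        intro a b h
        induction h with
        | rel a b hab =>
            obtain ⟨hs, hpos, heq⟩ := hab
            have heq' : b = (c * a.1, -a.2) := heq
            constructor
            · rintro ⟨k, rfl⟩
              refine ⟨k + 1, ?_⟩
              rw [heq', rotZ_zpow_apply, rotZ_zpow_apply]
              refine Prod.ext ?_ ?_
              · show c * (c ^ k * x.1) = c ^ (k + 1) * x.1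
                rw [zpow_add_one₀ hc]; ring
              · show -x.2 = x.2
                rw [hx3, neg_zero]
            · rintro ⟨k, hb⟩
              rw [rotZ_zpow_apply] at hb
              rw [heq'] at hb
              have h1 : c * a.1 = c ^ k * x.1 := congrArg Prod.fst hb
              have h2 : -a.2 = x.2 := congrArg Prod.snd hb
              refine ⟨k - 1, ?_⟩
              rw [rotZ_zpow_apply]
              refine Prod.ext ?_ ?_
              · show a.1 = c ^ (k - 1) * x.1
                have : a.1 = c⁻¹ * (c ^ k * x.1) := by
                  rw [← h1]; field_simp
                rw [this, zpow_sub_one₀ hc]; ring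
              · show a.2 = x.2
                rw [hx3] at h2 ⊢; linarith
        | refl a => exact Iff.rfl
        | symm a b _ ih => exact ih.symm
        | trans a b d _ _ ih1 ih2 => exact ih1.trans ih2
      exact (key x y h).mp ⟨0, by simp⟩
    · rintro ⟨k, rfl⟩
      have main : ∀ k : ℤ, Relation.EqvGen (lensRel p q) x ((rotZ θ ^ k) x) := by
        intro k
        induction k using Int.induction_on with
        | zero => simpa using Relation.EqvGen.refl x
        | succ n ih =>
            exact Relation.EqvGen.trans _ _ _ ih (Relation.EqvGen.rel _ _ (hstep n))
        | pred n ih =>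
            refine Relation.EqvGen.trans _ _ _ ih ?_
            have := Relation.EqvGen.rel _ _ (hstep (-(n : ℤ) - 1))
            rw [sub_add_cancel] at this
            have := Relation.EqvGen.symm _ _ this
            convert this using 2
      exact main k
  -- primitive root
  set pn : ℕ := p.natAbs with hpn
  have hpnz : (pn : ℤ) = p := Int.natAbs_of_nonneg hp0.le
  have hpn0 : pn ≠ 0 := by
    intro h
    rw [h] at hpnz; omega
  have hcop : Nat.Coprime q.natAbs pn := Nat.coprime_comm.mp hpq
  have hz : Complex.exp (2 * Real.pi * Complex.I / pn) ^ q.natAbs = c := by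
    rw [← Complex.exp_nat_mul]
    congr 1
    have hq : ((q.natAbs : ℂ)) = (q : ℂ) := by
      rw [← Int.cast_natCast (R := ℂ), Int.natAbs_of_nonneg h0]
    have hp : ((pn : ℂ)) = (p : ℂ) := by
      rw [← Int.cast_natCast (R := ℂ), hpnz]
    rw [hq, hp, hθ]
    push_cast
    ring
  have hprim : IsPrimitiveRoot c pn := by
    have := (Complex.isPrimitiveRoot_exp pn hpn0).pow_of_coprime q.natAbs hcop
    rwa [hz] at this
  -- range description
  have hrange : {y | ∃ k : ℤ, y = (rotZ θ ^ k) x} =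
      Set.range (fun m : Fin pn => ((c ^ (m : ℕ) * x.1, (0 : ℝ)) : ℂ × ℝ)) := by
    ext y
    simp only [Set.mem_setOf_eq, Set.mem_range]
    constructor
    · rintro ⟨k, rfl⟩
      have hper : c ^ k = c ^ ((k % pn).toNat) := by
        have h1 : c ^ (pn : ℤ) = 1 := by
          rw [zpow_natCast, hprim.pow_eq_one]
        have hk : k = (pn : ℤ) * (k / pn) + k % pn := (Int.mul_ediv_add_emod k pn).symm
        calc c ^ k = c ^ ((pn : ℤ) * (k / pn) + k % pn) := by rw [← hk]
          _ = (c ^ (pn : ℤ)) ^ (k / (pn:ℤ)) * c ^ (k % pn) := by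
              rw [zpow_add₀ hc, zpow_mul]
          _ = c ^ (k % pn) := by rw [h1]; simp
          _ = c ^ ((k % pn).toNat) := by
              rw [← zpow_natCast, Int.toNat_of_nonneg (Int.emod_nonneg k (by exact_mod_cast hpn0 ∘ fun h => by omega))]
      have hlt : (k % pn).toNat < pn := by
        have h2 : k % pn < pn := Int.emod_lt_of_pos k (by omega)
        have h3 : 0 ≤ k % pn := Int.emod_nonneg k (by omega)
        omega
      refine ⟨⟨(k % pn).toNat, hlt⟩, ?_⟩
      rw [rotZ_zpow_apply, hper, hx3]
    · rintro ⟨m, rfl⟩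
      refine ⟨(m : ℕ), ?_⟩
      rw [rotZ_zpow_apply, zpow_natCast, hx3]
  -- injectivity
  have hinj : Function.Injective (fun m : Fin pn => ((c ^ (m : ℕ) * x.1, (0 : ℝ)) : ℂ × ℝ)) := by
    intro a b hab
    simp only [Prod.mk.injEq] at hab
    have h1 : c ^ (a : ℕ) = c ^ (b : ℕ) := mul_right_cancel₀ hx10 hab.1
    exact Fin.ext (hprim.pow_inj a.isLt b.isLt h1)
  refine ⟨hset, ?_⟩
  rw [hset, hrange, ← Set.image_univ, Set.ncard_image_of_injective _ hinj, Set.ncard_univ]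
  simp [hpnz]
end

section
/- Let g : ℝ³ → ℝ³ be the rotation by angle 2πq/p about the x₃-axis and f : ℝ³ → ℝ³ the reflection (x₁,x₂,x₃) ↦ (x₁,x₂,−x₃), where p, q are integers with 0 ≤ q < p and gcd(p,q) = 1. Let ∼ be the equivalence relation on the unit sphere S² = {x ∈ ℝ³ : ‖x‖ = 1} generated by the pairs x ∼ f(g(x)) for all x ∈ S² with x₃ ≥ 0. Then for every x ∈ S² with x₃ > 0 and x ≠ (0,0,1), the equivalence class of x is exactly the two-element set {x, f(g(x))}, and the class of the north pole N = (0,0,1) is {N, S} where S = (0,0,−1). -/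
/-- A set closed under a relation in both directions is a union of
`EqvGen` classes. -/
lemma eqvgen_iff_of_closed {α : Type*} (r : α → α → Prop) (S : Set α)
    (hfwd : ∀ a ∈ S, ∀ b, r a b → b ∈ S)
    (hbwd : ∀ a ∈ S, ∀ b, r b a → b ∈ S) :
    ∀ a b, Relation.EqvGen r a b → (a ∈ S ↔ b ∈ S) := by
  intro a b h
  induction h with
  | rel a b h => exact ⟨fun ha => hfwd a ha b h, fun hb => hbwd b hb a h⟩
  | refl a => exact Iff.rfl
  | symm _ _ _ ih => exact ih.symm
  | trans _ _ _ _ _ ih1 ih2 => exact ih1.trans ih2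

/-- For a point `x` of the open upper hemisphere other than the north pole, the
equivalence class of the lens space identification is exactly `{x, f(g(x))}`;
the class of the north pole `N = (0,0,1)` is `{N, S}` with `S = (0,0,-1)`. -/
theorem stmt1 (p q : ℤ) (h0 : 0 ≤ q) (h1 : q < p) (hpq : Int.gcd p q = 1) :
    (∀ x : ℂ × ℝ, ‖x.1‖ ^ 2 + x.2 ^ 2 = 1 → 0 < x.2 → x ≠ ((0 : ℂ), (1 : ℝ)) →
      {y | Relation.EqvGen (lensRel p q) x y} =
        {x, reflZ (rotZ (2 * Real.pi * (q : ℝ) / (p : ℝ)) x)}) ∧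
    {y | Relation.EqvGen (lensRel p q) ((0 : ℂ), (1 : ℝ)) y} =
      {((0 : ℂ), (1 : ℝ)), ((0 : ℂ), (-1 : ℝ))} := by
  set θ : ℝ := 2 * Real.pi * (q : ℝ) / (p : ℝ) with hθ
  set e : ℂ := Complex.exp ((θ : ℂ) * Complex.I) with he
  have he0 : e ≠ 0 := Complex.exp_ne_zero _
  have fg_eq : ∀ x : ℂ × ℝ, reflZ (rotZ θ x) = (e * x.1, -x.2) := fun x => rfl
  have fg_inj : ∀ a b : ℂ × ℝ, reflZ (rotZ θ a) = reflZ (rotZ θ b) → a = b := by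
    intro a b hab
    rw [fg_eq, fg_eq, Prod.mk.injEq] at hab
    exact Prod.ext (mul_left_cancel₀ he0 hab.1) (by linarith [hab.2, neg_eq_iff_eq_neg.mp hab.2])
  constructor
  · intro x hsp hpos hne
    have hclosed := eqvgen_iff_of_closed (lensRel p q)
      ({x, reflZ (rotZ θ x)} : Set (ℂ × ℝ))
      (by
        rintro a (rfl | rfl) b hr
        · exact Or.inr hr.2.2
        · exfalso
          have h2 := hr.2.1
          rw [fg_eq] at h2
          simp only at h2
          linarith)
      (by
        rintro a (rfl | rfl) b hr
        · exfalso
          have h2 : a.2 = -b.2 := by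
            have := congrArg Prod.snd hr.2.2
            rw [fg_eq] at this
            exact this
          linarith [hr.2.1, h2]
        · exact Or.inl (fg_inj _ _ hr.2.2.symm))
    ext y
    constructor
    · intro hy
      exact (hclosed x y hy).mp (Or.inl rfl)
    · rintro (rfl | rfl)
      · exact Relation.EqvGen.refl _
      · exact Relation.EqvGen.rel _ _ ⟨hsp, hpos.le, rfl⟩
  · have hNsp : ‖((0 : ℂ) : ℂ)‖ ^ 2 + (1 : ℝ) ^ 2 = 1 := by simp
    have hfgN : reflZ (rotZ θ ((0 : ℂ), (1 : ℝ))) = ((0 : ℂ), (-1 : ℝ)) := by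
      rw [fg_eq]; simp
    have hclosed := eqvgen_iff_of_closed (lensRel p q)
      ({((0 : ℂ), (1 : ℝ)), ((0 : ℂ), (-1 : ℝ))} : Set (ℂ × ℝ))
      (by
        rintro a (rfl | rfl) b hr
        · right
          rw [hr.2.2, hfgN]
          exact rfl
        · exfalso
          have := hr.2.1
          norm_num at this)
      (by
        rintro a (rfl | rfl) b hr
        · exfalso
          have h2 : (1 : ℝ) = -b.2 := by
            have := congrArg Prod.snd hr.2.2
            rw [fg_eq] at this
            exact this
          linarith [hr.2.1]
        · left
          have hb := hr.2.2
          rw [fg_eq, Prod.mk.injEq] at hb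
          have hb1 : b.1 = 0 := (mul_eq_zero.mp hb.1.symm).resolve_left he0
          have hb2 : b.2 = 1 := by linarith [neg_eq_iff_eq_neg.mp hb.2]
          exact Prod.ext hb1 hb2)
    ext y
    constructor
    · intro hy
      exact (hclosed _ y hy).mp (Or.inl rfl)
    · rintro (rfl | rfl)
      · exact Relation.EqvGen.refl _
      · have : Relation.EqvGen (lensRel p q) ((0 : ℂ), (1 : ℝ)) (reflZ (rotZ θ ((0 : ℂ), (1 : ℝ)))) :=
          Relation.EqvGen.rel _ _ ⟨hNsp, zero_le_one, rfl⟩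
        rwa [hfgN] at this
end
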